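/- arXiv:1611.06462 — 2 statements merged into one kernel-verified Lean document; each statement's English description precedes it below -/
import Mathlib

section
/- Let μ₁ and μ₂ be finite positive regular Borel measures on a locally compact Hausdorff space X with S := supp(μ₁) ∩ supp(μ₂) ≠ ∅. Suppose there exist a point x ∈ S, an open neighborhood N of x, and constants m, M > 0 such that m ≤ μ₂(N_x)/μ₁(N_x) ≤ M for every open set N_x with x ∈ N_x ⊆ N. Then inf(μ₁, μ₂) ≠ 0. -/
open MeasureTheory

/-- The support of a Borel measure: the set of points all of whose open neighborhoods have
positive measure. -/
def measSupport {X : Type*} [TopologicalSpace X] [MeasurableSpace X] (μ : Measure X) :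
    Set X :=
  {x | ∀ G : Set X, IsOpen G → x ∈ G → 0 < μ G}

/-- Let `μ₁`, `μ₂` be finite positive regular Borel measures on a locally compact Hausdorff
space with `S := supp μ₁ ∩ supp μ₂ ≠ ∅`.  If there are `x ∈ S`, an open neighborhood `N` of
`x` and constants `m, M > 0` with `m ≤ μ₂(Nₓ)/μ₁(Nₓ) ≤ M` for every open `Nₓ` with
`x ∈ Nₓ ⊆ N`, then `inf (μ₁, μ₂) ≠ 0`. -/
theorem inf_ne_zero_of_comparable_on_support
    {X : Type*} [TopologicalSpace X] [LocallyCompactSpace X] [T2Space X]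
    [MeasurableSpace X] [BorelSpace X]
    (μ₁ μ₂ : Measure X) [IsFiniteMeasure μ₁] [IsFiniteMeasure μ₂]
    [μ₁.Regular] [μ₂.Regular]
    (hS : (measSupport μ₁ ∩ measSupport μ₂).Nonempty)
    (x : X) (hx : x ∈ measSupport μ₁ ∩ measSupport μ₂)
    (N : Set X) (hN : IsOpen N) (hxN : x ∈ N)
    (m M : ℝ) (hm : 0 < m) (hM : 0 < M)
    (hratio : ∀ Nx : Set X, IsOpen Nx → x ∈ Nx → Nx ⊆ N →
      ENNReal.ofReal m ≤ μ₂ Nx / μ₁ Nx ∧ μ₂ Nx / μ₁ Nx ≤ ENNReal.ofReal M) :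
    μ₁ ⊓ μ₂ ≠ 0 := by
  intro h0
  obtain ⟨hx₁, hx₂⟩ := hx
  have hdisj : Disjoint μ₁ μ₂ := disjoint_iff.mpr h0
  obtain ⟨A, hA, hμ₁A, hμ₂Ac⟩ := Measure.mutuallySingular_of_disjoint hdisj
  by_cases hxA : x ∈ A
  · -- μ₁ A = 0, x ∈ A : find small open U ⊇ A ∩ N
    have hμ₂N : 0 < μ₂ N := hx₂ N hN hxN
    have hr : (0 : ENNReal) < μ₂ N / ENNReal.ofReal M :=
      ENNReal.div_pos hμ₂N.ne' ENNReal.ofReal_ne_top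
    have hAN : μ₁ (A ∩ N) = 0 :=
      measure_mono_null Set.inter_subset_left hμ₁A
    obtain ⟨U, hUsub, hUopen, hUlt⟩ :=
      Set.exists_isOpen_lt_of_lt (μ := μ₁) (A ∩ N) _ (hAN ▸ hr)
    set Nx := U ∩ N with hNx
    have hNxopen : IsOpen Nx := hUopen.inter hN
    have hxNx : x ∈ Nx := ⟨hUsub ⟨hxA, hxN⟩, hxN⟩
    have hμ₁Nx : 0 < μ₁ Nx := hx₁ Nx hNxopen hxNx
    have hratio' := (hratio Nx hNxopen hxNx Set.inter_subset_right).2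
    have hle : μ₂ Nx ≤ ENNReal.ofReal M * μ₁ Nx :=
      (ENNReal.div_le_iff hμ₁Nx.ne' (measure_ne_top _ _)).mp hratio'
    have hNsub : μ₂ N ≤ μ₂ Nx := by
      calc μ₂ N ≤ μ₂ (A ∩ N) + μ₂ (N \ A) := by
            refine le_trans (measure_mono ?_) (measure_union_le _ _)
            intro y hy
            by_cases hyA : y ∈ A
            · exact Or.inl ⟨hyA, hy⟩
            · exact Or.inr ⟨hy, hyA⟩
        _ = μ₂ (A ∩ N) := by
            rw [measure_mono_null (Set.diff_subset_compl _ _) hμ₂Ac, add_zero]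
        _ ≤ μ₂ Nx := measure_mono (fun y hy => ⟨hUsub hy, hy.2⟩)
    have hMne : ENNReal.ofReal M ≠ 0 := by
      simp [ENNReal.ofReal_eq_zero, not_le, hM]
    have : μ₂ N < μ₂ N := by
      calc μ₂ N ≤ ENNReal.ofReal M * μ₁ Nx := hNsub.trans hle
        _ ≤ ENNReal.ofReal M * μ₁ U :=
            mul_le_mul_right (measure_mono Set.inter_subset_left) _
        _ < ENNReal.ofReal M * (μ₂ N / ENNReal.ofReal M) :=
            (ENNReal.mul_lt_mul_iff_right hMne ENNReal.ofReal_ne_top).mpr hUlt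
        _ ≤ μ₂ N := ENNReal.mul_div_le
    exact absurd this (lt_irrefl _)
  · -- x ∈ Aᶜ : find small open W ⊇ Aᶜ ∩ N
    have hμ₁N : 0 < μ₁ N := hx₁ N hN hxN
    have hr : (0 : ENNReal) < ENNReal.ofReal m * μ₁ N :=
      ENNReal.mul_pos (by simp [ENNReal.ofReal_eq_zero, not_le, hm]) hμ₁N.ne'
    have hAN : μ₂ (Aᶜ ∩ N) = 0 :=
      measure_mono_null Set.inter_subset_left hμ₂Ac
    obtain ⟨W, hWsub, hWopen, hWlt⟩ :=
      Set.exists_isOpen_lt_of_lt (μ := μ₂) (Aᶜ ∩ N) _ (hAN ▸ hr)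
    set Nx := W ∩ N with hNx
    have hNxopen : IsOpen Nx := hWopen.inter hN
    have hxNx : x ∈ Nx := ⟨hWsub ⟨hxA, hxN⟩, hxN⟩
    have hμ₁Nx : 0 < μ₁ Nx := hx₁ Nx hNxopen hxNx
    have hratio' := (hratio Nx hNxopen hxNx Set.inter_subset_right).1
    have hle : ENNReal.ofReal m * μ₁ Nx ≤ μ₂ Nx :=
      (ENNReal.le_div_iff_mul_le (Or.inl hμ₁Nx.ne') (Or.inl (measure_ne_top _ _))).mp hratio'
    have hNsub : μ₁ N ≤ μ₁ Nx := by
      calc μ₁ N ≤ μ₁ (Aᶜ ∩ N) + μ₁ (N \ Aᶜ) := by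
            refine le_trans (measure_mono ?_) (measure_union_le _ _)
            intro y hy
            by_cases hyA : y ∈ A
            · exact Or.inr ⟨hy, by simp [hyA]⟩
            · exact Or.inl ⟨hyA, hy⟩
        _ = μ₁ (Aᶜ ∩ N) := by
            rw [measure_mono_null (Set.diff_subset_compl _ _) (by simpa using hμ₁A), add_zero]
        _ ≤ μ₁ Nx := measure_mono (fun y hy => ⟨hWsub hy, hy.2⟩)
    have : ENNReal.ofReal m * μ₁ N < ENNReal.ofReal m * μ₁ N := by
      calc ENNReal.ofReal m * μ₁ N ≤ ENNReal.ofReal m * μ₁ Nx := mul_le_mul_right hNsub _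
        _ ≤ μ₂ Nx := hle
        _ ≤ μ₂ W := measure_mono Set.inter_subset_left
        _ < ENNReal.ofReal m * μ₁ N := hWlt
    exact absurd this (lt_irrefl _)
end

section
/- Suppose θ and δ are finite Blaschke products, and ω is an inner function satisfying at least one of: (i) ω is a nonconstant finite Blaschke product; (ii) 𝒵(θ) ∪ 𝒵(δ) ⊆ ⋃{R(ω, z₀) : z₀ ∈ 𝕋 is a singularity of ω}. Then θ and δ are coprime if and only if θ∘ω and δ∘ω are coprime. -/
open MeasureTheory Complex

noncomputable section

instance : Fact (0 < 2 * Real.pi) := ⟨Real.two_pi_pos⟩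

/-- The boundary point `e^{is}` of the unit circle corresponding to `s : ℝ/2πℤ`. -/
def bdry (s : AddCircle (2 * Real.pi)) : ℂ := (AddCircle.toCircle s : ℂ)

/-- An inner function: a bounded holomorphic function on the open unit disc whose radial
limits exist and have modulus one almost everywhere on the unit circle. -/
def InnerDisc (θ : ℂ → ℂ) : Prop :=
  DifferentiableOn ℂ θ (Metric.ball (0 : ℂ) 1) ∧
  (∃ C : ℝ, ∀ z ∈ Metric.ball (0 : ℂ) 1, ‖θ z‖ ≤ C) ∧
  ∀ᵐ s ∂(volume : Measure (AddCircle (2 * Real.pi))),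
    ∃ L : ℂ, ‖L‖ = 1 ∧
      Filter.Tendsto (fun r : ℝ => θ ((r : ℂ) * bdry s)) (nhdsWithin 1 (Set.Iio 1)) (nhds L)

/-- `ω` is an inner divisor of `θ`: `θ = ω · θ'` on the disc for some inner `θ'`. -/
def InnerDivides (ω θ : ℂ → ℂ) : Prop :=
  InnerDisc ω ∧ ∃ θ' : ℂ → ℂ, InnerDisc θ' ∧ ∀ z ∈ Metric.ball (0 : ℂ) 1, θ z = ω z * θ' z

/-- Two inner functions are *coprime* if their only common inner divisors are unimodular
constants. -/
def CoprimeInner (θ₁ θ₂ : ℂ → ℂ) : Prop :=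
  ∀ ω : ℂ → ℂ, InnerDivides ω θ₁ → InnerDivides ω θ₂ →
    ∃ c : ℂ, ‖c‖ = 1 ∧ ∀ z ∈ Metric.ball (0 : ℂ) 1, ω z = c

/-- The Blaschke factor `b_α(z) = (z − α)/(1 − ᾱ z)`. -/
def blaschkeFactor (α z : ℂ) : ℂ := (z - α) / (1 - (starRingEnd ℂ) α * z)

/-- A finite Blaschke product `c ∏_{j=1}^d b_{α_j}` with `|c| = 1` and `α_j ∈ 𝔻`. -/
def IsFiniteBlaschke (θ : ℂ → ℂ) : Prop :=
  ∃ (c : ℂ) (d : ℕ) (α : Fin d → ℂ), ‖c‖ = 1 ∧ (∀ j, ‖α j‖ < 1) ∧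
    ∀ z ∈ Metric.ball (0 : ℂ) 1, θ z = c * ∏ j, blaschkeFactor (α j) z

/-- The zero set of `θ` in the open unit disc. -/
def zeroSet (θ : ℂ → ℂ) : Set ℂ := {z | z ∈ Metric.ball (0 : ℂ) 1 ∧ θ z = 0}

/-- `z₀` is a singularity of `ω` if `ω` has no analytic extension to a neighborhood of
`z₀`. -/
def HasSingularityAt (ω : ℂ → ℂ) (z₀ : ℂ) : Prop :=
  ¬ ∃ (U : Set ℂ) (g : ℂ → ℂ), IsOpen U ∧ z₀ ∈ U ∧ DifferentiableOn ℂ g U ∧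
      Set.EqOn g ω (U ∩ Metric.ball (0 : ℂ) 1)

/-- The range set `R(f, z₀) = ⋂_{r > 0} f(𝔻 ∩ Δ(z₀, r))`. -/
def rangeSet (f : ℂ → ℂ) (z₀ : ℂ) : Set ℂ :=
  ⋂ r ∈ Set.Ioi (0 : ℝ), f '' (Metric.ball (0 : ℂ) 1 ∩ Metric.ball z₀ r)

local notation "𝔻" => Metric.ball (0:ℂ) 1

lemma mem_disc {z : ℂ} : z ∈ 𝔻 ↔ ‖z‖ < 1 := by
  rw [Metric.mem_ball, dist_zero_right]

lemma norm_bdry (s : AddCircle (2 * Real.pi)) : ‖bdry s‖ = 1 := by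
  simpa [bdry] using Circle.norm_coe (AddCircle.toCircle s)

lemma blaschke_key (α z : ℂ) :
    Complex.normSq (1 - (starRingEnd ℂ) α * z) - Complex.normSq (z - α)
      = (1 - Complex.normSq z) * (1 - Complex.normSq α) := by
  simp only [Complex.normSq_apply, Complex.sub_re, Complex.sub_im, Complex.one_re,
    Complex.one_im, Complex.mul_re, Complex.mul_im, Complex.conj_re, Complex.conj_im]
  ring

lemma denom_ne_zero {α z : ℂ} (hα : ‖α‖ < 1) (hz : ‖z‖ ≤ 1) :
    (1 : ℂ) - (starRingEnd ℂ) α * z ≠ 0 := by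
  intro h
  have h1 : (1 : ℂ) = (starRingEnd ℂ) α * z := by linear_combination h
  have : (1:ℝ) = ‖(starRingEnd ℂ) α * z‖ := by rw [← h1]; simp
  rw [norm_mul, RCLike.norm_conj] at this
  nlinarith [norm_nonneg z, norm_nonneg α]

lemma norm_blaschke_lt {α z : ℂ} (hα : ‖α‖ < 1) (hz : ‖z‖ < 1) :
    ‖blaschkeFactor α z‖ < 1 := by
  have hden := denom_ne_zero hα hz.le
  have hdpos : 0 < ‖(1 : ℂ) - (starRingEnd ℂ) α * z‖ := norm_pos_iff.2 hden
  rw [blaschkeFactor, norm_div, div_lt_one hdpos]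
  have hk := blaschke_key α z
  have h1 : ‖z - α‖ ^ 2 = Complex.normSq (z - α) := by
    rw [← Complex.sq_norm]
  have h2 : ‖(1 : ℂ) - (starRingEnd ℂ) α * z‖ ^ 2 = Complex.normSq (1 - (starRingEnd ℂ) α * z) := by
    rw [← Complex.sq_norm]
  have hz2 : Complex.normSq z = ‖z‖ ^ 2 := by rw [← Complex.sq_norm]
  have hα2 : Complex.normSq α = ‖α‖ ^ 2 := by rw [← Complex.sq_norm]
  have hsq : ‖z - α‖ ^ 2 < ‖(1 : ℂ) - (starRingEnd ℂ) α * z‖ ^ 2 := by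
    nlinarith [mul_pos (by nlinarith [norm_nonneg z] : (0:ℝ) < 1 - ‖z‖^2)
      (by nlinarith [norm_nonneg α] : (0:ℝ) < 1 - ‖α‖^2)]
  exact lt_of_pow_lt_pow_left₀ 2 (norm_nonneg _) hsq

lemma norm_blaschke_eq_one {α z : ℂ} (hα : ‖α‖ < 1) (hz : ‖z‖ = 1) :
    ‖blaschkeFactor α z‖ = 1 := by
  have hden := denom_ne_zero hα hz.le
  have hdpos : 0 < ‖(1 : ℂ) - (starRingEnd ℂ) α * z‖ := norm_pos_iff.2 hden
  have hk := blaschke_key α z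
  have h1 : ‖z - α‖ ^ 2 = Complex.normSq (z - α) := by rw [← Complex.sq_norm]
  have h2 : ‖(1 : ℂ) - (starRingEnd ℂ) α * z‖ ^ 2 = Complex.normSq (1 - (starRingEnd ℂ) α * z) := by
    rw [← Complex.sq_norm]
  have hz2 : Complex.normSq z = ‖z‖ ^ 2 := by rw [← Complex.sq_norm]
  have hz1 : Complex.normSq z = 1 := by rw [hz2, hz]; norm_num
  rw [hz1] at hk; simp at hk
  have hsq : ‖(1 : ℂ) - (starRingEnd ℂ) α * z‖ ^ 2 = ‖z - α‖ ^ 2 := by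
    rw [h1, h2]; linarith
  have heq : ‖(1 : ℂ) - (starRingEnd ℂ) α * z‖ = ‖z - α‖ :=
    le_antisymm (le_of_pow_le_pow_left₀ two_ne_zero (norm_nonneg _) hsq.le)
      (le_of_pow_le_pow_left₀ two_ne_zero (norm_nonneg _) hsq.ge)
  rw [blaschkeFactor, norm_div, heq, div_self]
  rw [heq] at hdpos; exact hdpos.ne'

lemma blaschke_eq_zero {α z : ℂ} (hα : ‖α‖ < 1) (hz : ‖z‖ ≤ 1) :
    blaschkeFactor α z = 0 ↔ z = α := by
  rw [blaschkeFactor, div_eq_zero_iff]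
  constructor
  · rintro (h | h)
    · exact sub_eq_zero.1 h
    · exact absurd h (denom_ne_zero hα hz)
  · intro h; exact Or.inl (by rw [h, sub_self])

lemma diffOn_prod {ι : Type*} {s : Finset ι} {g : ι → ℂ → ℂ} {S : Set ℂ}
    (h : ∀ i ∈ s, DifferentiableOn ℂ (g i) S) :
    DifferentiableOn ℂ (fun z => ∏ i ∈ s, g i z) S := by
  classical
  induction s using Finset.induction_on with
  | empty => simpa using differentiableOn_const 1
  | insert a t hni ih =>
    simp only [Finset.prod_insert hni]
    exact (h a (Finset.mem_insert_self a t)).mul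
      (ih fun i hi => h i (Finset.mem_insert_of_mem hi))

lemma contOn_prod {ι : Type*} {s : Finset ι} {g : ι → ℂ → ℂ} {S : Set ℂ}
    (h : ∀ i ∈ s, ContinuousOn (g i) S) :
    ContinuousOn (fun z => ∏ i ∈ s, g i z) S := by
  classical
  induction s using Finset.induction_on with
  | empty => simpa using continuousOn_const
  | insert a t hni ih =>
    simp only [Finset.prod_insert hni]
    exact (h a (Finset.mem_insert_self a t)).mul
      (ih fun i hi => h i (Finset.mem_insert_of_mem hi))

lemma diffOn_blaschke_comp {φ : ℂ → ℂ} (hφ : DifferentiableOn ℂ φ 𝔻)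
    (hm : ∀ z ∈ 𝔻, ‖φ z‖ < 1) {α : ℂ} (hα : ‖α‖ < 1) :
    DifferentiableOn ℂ (fun z => blaschkeFactor α (φ z)) 𝔻 := by
  simp only [blaschkeFactor]
  exact (hφ.sub (differentiableOn_const _)).div
    ((differentiableOn_const _).sub ((differentiableOn_const _).mul hφ))
    (fun z hz => denom_ne_zero hα (hm z hz).le)

lemma tendsto_blaschke {g : ℝ → ℂ} {l : Filter ℝ} {L α : ℂ}
    (hg : Filter.Tendsto g l (nhds L)) (hα : ‖α‖ < 1) (hL : ‖L‖ ≤ 1) :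
    Filter.Tendsto (fun x => blaschkeFactor α (g x)) l (nhds (blaschkeFactor α L)) := by
  simp only [blaschkeFactor]
  exact (hg.sub tendsto_const_nhds).div
    (tendsto_const_nhds.sub (tendsto_const_nhds.mul hg)) (denom_ne_zero hα hL)

lemma innerDisc_comp_prod {ω : ℂ → ℂ} (hω : InnerDisc ω) (hm : ∀ z ∈ 𝔻, ‖ω z‖ < 1)
    {c : ℂ} (hc : ‖c‖ = 1) {d : ℕ} {α : Fin d → ℂ} (hα : ∀ j, ‖α j‖ < 1)
    (S : Finset (Fin d)) :
    InnerDisc (fun z => c * ∏ j ∈ S, blaschkeFactor (α j) (ω z)) := by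
  refine ⟨(differentiableOn_const c).mul
      (diffOn_prod fun j _ => diffOn_blaschke_comp hω.1 hm (hα j)), ⟨1, ?_⟩, ?_⟩
  · intro z hz
    rw [norm_mul, hc, one_mul, norm_prod]
    exact Finset.prod_le_one (fun j _ => norm_nonneg _)
      (fun j _ => (norm_blaschke_lt (hα j) (hm z hz)).le)
  · filter_upwards [hω.2.2] with s hs
    obtain ⟨L, hL1, hLt⟩ := hs
    refine ⟨c * ∏ j ∈ S, blaschkeFactor (α j) L, ?_, ?_⟩
    · rw [norm_mul, hc, one_mul, norm_prod,
        Finset.prod_congr rfl (fun j _ => norm_blaschke_eq_one (hα j) hL1),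
        Finset.prod_const_one]
    · exact tendsto_const_nhds.mul
        (tendsto_finset_prod S fun j _ => tendsto_blaschke hLt (hα j) hL1.le)

lemma innerDisc_comp_bl {ω : ℂ → ℂ} (hω : InnerDisc ω) (hm : ∀ z ∈ 𝔻, ‖ω z‖ < 1)
    {α : ℂ} (hα : ‖α‖ < 1) : InnerDisc (fun z => blaschkeFactor α (ω z)) := by
  refine ⟨diffOn_blaschke_comp hω.1 hm hα, ⟨1, fun z hz => (norm_blaschke_lt hα (hm z hz)).le⟩, ?_⟩
  filter_upwards [hω.2.2] with s hs
  obtain ⟨L, hL1, hLt⟩ := hs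
  exact ⟨blaschkeFactor α L, norm_blaschke_eq_one hα hL1, tendsto_blaschke hLt hα hL1.le⟩

lemma innerDisc_id : InnerDisc (fun z : ℂ => z) := by
  refine ⟨differentiableOn_id, ⟨1, fun z hz => (mem_disc.1 hz).le⟩, ae_of_all _ fun s => ?_⟩
  refine ⟨bdry s, norm_bdry s, ?_⟩
  have : Filter.Tendsto (fun r : ℝ => (r : ℂ) * bdry s) (nhdsWithin 1 (Set.Iio 1))
      (nhds ((1 : ℂ) * bdry s)) :=
    (((Complex.continuous_ofReal.tendsto 1).mono_left nhdsWithin_le_nhds).mul tendsto_const_nhds)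
  simpa using this

lemma volume_circle_ne_zero : (volume : Measure (AddCircle (2 * Real.pi))) ≠ 0 := by
  intro h
  have := AddCircle.measure_univ (T := 2 * Real.pi)
  rw [h] at this
  simp only [Measure.coe_zero, Pi.zero_apply] at this
  have h2 := ENNReal.ofReal_pos.2 Real.two_pi_pos
  rw [← this] at h2
  exact lt_irrefl _ h2

lemma inner_exists_ne_zero {u : ℂ → ℂ} (hu : InnerDisc u) : ∃ z ∈ 𝔻, u z ≠ 0 := by
  by_contra hcon
  push_neg at hcon
  have hne : (ae (volume : Measure (AddCircle (2 * Real.pi)))).NeBot :=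
    ae_neBot.2 volume_circle_ne_zero
  obtain ⟨s, L, hL1, hLt⟩ := hu.2.2.exists
  have hev : (fun r : ℝ => u ((r : ℂ) * bdry s)) =ᶠ[nhdsWithin 1 (Set.Iio 1)] fun _ => 0 := by
    have hmem : Set.Ioo (0:ℝ) 1 ∈ nhdsWithin (1:ℝ) (Set.Iio 1) := by
      rw [show Set.Ioo (0:ℝ) 1 = Set.Ioi 0 ∩ Set.Iio 1 from rfl]
      exact Filter.inter_mem (mem_nhdsWithin_of_mem_nhds (Ioi_mem_nhds one_pos))
        self_mem_nhdsWithin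
    filter_upwards [hmem] with r hr
    apply hcon
    rw [mem_disc, norm_mul, norm_bdry, mul_one, Complex.norm_real, Real.norm_eq_abs,
      abs_of_pos hr.1]
    exact hr.2
  have : L = 0 := tendsto_nhds_unique hLt ((Filter.tendsto_congr' hev).2 tendsto_const_nhds)
  rw [this] at hL1
  simpa using hL1

theorem inner_norm_le_one {f : ℂ → ℂ} (hf : InnerDisc f) : ∀ z ∈ 𝔻, ‖f z‖ ≤ 1 := by
  classical
  obtain ⟨hd, ⟨C, hC⟩, hae⟩ := hf
  -- transfer the a.e. boundary condition to the interval (0, 2π]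
  have hmk := AddCircle.measurePreserving_mk (2 * Real.pi) 0
  rw [zero_add] at hmk
  set μ : Measure ℝ := volume.restrict (Set.Ioc 0 (2 * Real.pi)) with hμ
  haveI : IsFiniteMeasure μ := by
    constructor
    simp only [hμ, Measure.restrict_apply_univ, Real.volume_Ioc]
    exact ENNReal.ofReal_lt_top
  have haeR : ∀ᵐ t : ℝ ∂μ, ∃ L : ℂ, ‖L‖ = 1 ∧
      Filter.Tendsto (fun r : ℝ => f ((r : ℂ) * Complex.exp (t * Complex.I)))
        (nhdsWithin 1 (Set.Iio 1)) (nhds L) := by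
    have h1 : ∀ᵐ t : ℝ ∂μ, ∃ L : ℂ, ‖L‖ = 1 ∧
        Filter.Tendsto (fun r : ℝ => f ((r : ℂ) * bdry ((t : ℝ) : AddCircle (2 * Real.pi))))
          (nhdsWithin 1 (Set.Iio 1)) (nhds L) := by
      exact MeasureTheory.ae_of_ae_map (μ := μ)
        (f := ((↑) : ℝ → AddCircle (2 * Real.pi))) hmk.measurable.aemeasurable
        (p := fun s : AddCircle (2 * Real.pi) => ∃ L : ℂ, ‖L‖ = 1 ∧ Filter.Tendsto
          (fun r : ℝ => f ((r : ℂ) * bdry s)) (nhdsWithin 1 (Set.Iio 1)) (nhds L))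
        (by rw [hmk.map_eq]; exact hae)
    refine h1.mono fun t ht => ?_
    have hb : bdry ((t : ℝ) : AddCircle (2 * Real.pi)) = Complex.exp (t * Complex.I) := by
      have hπ : (2 * Real.pi) / (2 * Real.pi) = 1 := div_self (by positivity)
      rw [bdry, AddCircle.toCircle_apply_mk, hπ, one_mul, Circle.coe_exp]
    rwa [hb] at ht
  -- the limit function
  set Lf : ℝ → ℂ := fun t =>
    Filter.limUnder (nhdsWithin (1:ℝ) (Set.Iio 1)) (fun r : ℝ => f ((r : ℂ) * Complex.exp (t * Complex.I)))
    with hLf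
  have haeL : ∀ᵐ t : ℝ ∂μ, ‖Lf t‖ = 1 ∧
      Filter.Tendsto (fun r : ℝ => f ((r : ℂ) * Complex.exp (t * Complex.I)))
        (nhdsWithin 1 (Set.Iio 1)) (nhds (Lf t)) := by
    refine haeR.mono fun t ht => ?_
    obtain ⟨L, hL1, hLt⟩ := ht
    have : Lf t = L := hLt.limUnder_eq
    rw [this]
    exact ⟨hL1, hLt⟩
  intro z₀ hz₀
  have hrz1 : ‖z₀‖ < 1 := mem_disc.1 hz₀
  set rz := ‖z₀‖ with hrzdef
  have hrz0 : 0 ≤ rz := norm_nonneg _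
  set r₀ : ℝ := (1 + rz) / 2 with hr₀
  have hr₀a : rz < r₀ := by rw [hr₀]; linarith
  have hr₀b : r₀ < 1 := by rw [hr₀]; linarith
  have hr₀pos : 0 < r₀ := by rw [hr₀]; linarith
  set ρ : ℕ → ℝ := fun k => 1 - (1 - r₀) * (1 / (k + 1)) with hρ
  have hρ_lt : ∀ k, ρ k < 1 := by
    intro k
    have h0 : (0:ℝ) < 1 - r₀ := by linarith
    have : (0:ℝ) < (1 - r₀) * (1 / ((k:ℝ) + 1)) := by positivity
    rw [hρ]; simp only; linarith
  have hρ_ge : ∀ k, r₀ ≤ ρ k := by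
    intro k
    have h1 : (1 / ((k:ℝ) + 1)) ≤ 1 := by
      rw [div_le_one (by positivity)]; linarith [Nat.cast_nonneg (α := ℝ) k]
    have : (1 - r₀) * (1 / ((k:ℝ) + 1)) ≤ (1 - r₀) * 1 :=
      mul_le_mul_of_nonneg_left h1 (by linarith)
    rw [hρ]; simp only; linarith
  have hρ_pos : ∀ k, 0 < ρ k := fun k => lt_of_lt_of_le hr₀pos (hρ_ge k)
  have hρ_tend : Filter.Tendsto ρ Filter.atTop (nhdsWithin 1 (Set.Iio 1)) := by
    rw [tendsto_nhdsWithin_iff]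
    constructor
    · have h1 : Filter.Tendsto (fun k : ℕ => (1 - r₀) * (1 / ((k:ℝ) + 1))) Filter.atTop
          (nhds ((1 - r₀) * 0)) :=
        tendsto_one_div_add_atTop_nhds_zero_nat.const_mul _
      rw [mul_zero] at h1
      have h2 := h1.const_sub (1:ℝ)
      rw [sub_zero] at h2
      exact h2
    · exact Filter.Eventually.of_forall fun k => hρ_lt k
  have hC0 : 0 ≤ C := le_trans (norm_nonneg _) (hC 0 (Metric.mem_ball_self one_pos))
  set C' : ℝ := max C 1 with hC'def
  have hC'1 : (1:ℝ) ≤ C' := le_max_right _ _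
  have hC' : ∀ z ∈ 𝔻, ‖f z‖ ≤ C' := fun z hz => le_trans (hC z hz) (le_max_left _ _)
  -- the main bound for each power
  have key : ∀ n : ℕ, ‖f z₀‖ ^ n ≤ (1 - rz)⁻¹ := by
    intro n
    -- Cauchy integral formula on each circle of radius ρ k
    have hcauchy : ∀ k, (∮ z in C(0, ρ k), (z - z₀)⁻¹ • (f z) ^ n)
        = (2 * Real.pi * Complex.I : ℂ) • (f z₀) ^ n := by
      intro k
      refine DiffContOnCl.circleIntegral_sub_inv_smul ?_ ?_
      · refine ⟨(hd.mono (Metric.ball_subset_ball (hρ_lt k).le)).pow n, ?_⟩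
        have hsub : closure (Metric.ball (0:ℂ) (ρ k)) ⊆ 𝔻 := by
          rw [closure_ball (0:ℂ) (hρ_pos k).ne']
          exact Metric.closedBall_subset_ball (hρ_lt k)
        exact ((hd.continuousOn.mono hsub).pow n)
      · rw [Metric.mem_ball, dist_zero_right]
        exact lt_of_lt_of_le hr₀a (hρ_ge k)
    set F : ℕ → ℝ → ℂ := fun k t =>
      (circleMap 0 (ρ k) t * Complex.I) •
        (((circleMap 0 (ρ k) t) - z₀)⁻¹ • (f (circleMap 0 (ρ k) t)) ^ n) with hF
    set G : ℝ → ℂ := fun t =>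
      (Complex.exp (t * Complex.I) * Complex.I) •
        ((Complex.exp (t * Complex.I) - z₀)⁻¹ • (Lf t) ^ n) with hG
    have hmemk : ∀ k t, circleMap 0 (ρ k) t ∈ 𝔻 := by
      intro k t
      rw [mem_disc, norm_circleMap_zero, abs_of_pos (hρ_pos k)]
      exact hρ_lt k
    have hnek : ∀ k t, circleMap 0 (ρ k) t - z₀ ≠ 0 := by
      intro k t
      intro hzero
      have h1 : circleMap 0 (ρ k) t = z₀ := by linear_combination hzero
      have := congrArg norm h1
      rw [norm_circleMap_zero, abs_of_pos (hρ_pos k)] at this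
      have h2 : rz < ρ k := lt_of_lt_of_le hr₀a (hρ_ge k)
      rw [← hrzdef] at this
      linarith
    have hFk_eq : ∀ k, (∫ t, F k t ∂μ) = (2 * Real.pi * Complex.I : ℂ) • (f z₀) ^ n := by
      intro k
      rw [← hcauchy k]
      rw [circleIntegral]
      rw [intervalIntegral.integral_of_le Real.two_pi_pos.le]
      rw [hμ]
      apply MeasureTheory.integral_congr_ae
      apply Filter.Eventually.of_forall
      intro t
      rw [hF]
      simp only [deriv_circleMap]
    have hFmeas : ∀ k, AEStronglyMeasurable (F k) μ := by
      intro k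
      apply Continuous.aestronglyMeasurable
      have hc1 : Continuous (circleMap 0 (ρ k)) := continuous_circleMap _ _
      have hc2 : Continuous fun t => f (circleMap 0 (ρ k) t) :=
        hd.continuousOn.comp_continuous hc1 (hmemk k)
      have hc3 : Continuous fun t => (circleMap 0 (ρ k) t - z₀)⁻¹ :=
        ((hc1.sub continuous_const).inv₀ (hnek k))
      exact ((hc1.mul continuous_const).smul ((hc3.smul (hc2.pow n))))
    have hbound : ∀ k, ∀ᵐ t : ℝ ∂μ, ‖F k t‖ ≤ C' ^ n * (r₀ - rz)⁻¹ := by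
      intro k
      apply Filter.Eventually.of_forall
      intro t
      rw [hF]
      simp only [norm_smul, norm_mul, Complex.norm_I, mul_one, norm_inv, norm_pow]
      have h1 : ‖circleMap 0 (ρ k) t‖ = ρ k := by
        rw [norm_circleMap_zero, abs_of_pos (hρ_pos k)]
      have h2 : r₀ - rz ≤ ‖circleMap 0 (ρ k) t - z₀‖ := by
        have := norm_sub_norm_le (circleMap 0 (ρ k) t) z₀
        rw [h1] at this
        have h3 := hρ_ge k
        rw [← hrzdef] at this
        linarith
      have h3 : ‖circleMap 0 (ρ k) t - z₀‖⁻¹ ≤ (r₀ - rz)⁻¹ := by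
        apply inv_anti₀ (by linarith) h2
      have h4 : ‖f (circleMap 0 (ρ k) t)‖ ^ n ≤ C' ^ n :=
        pow_le_pow_left₀ (norm_nonneg _) (hC' _ (hmemk k t)) n
      have h5 : ρ k ≤ 1 := (hρ_lt k).le
      have hrrz : (0:ℝ) < r₀ - rz := by linarith
      rw [h1]
      calc ρ k * (‖circleMap 0 (ρ k) t - z₀‖⁻¹ * ‖f (circleMap 0 (ρ k) t)‖ ^ n)
          ≤ 1 * ((r₀ - rz)⁻¹ * C' ^ n) := by
            apply mul_le_mul h5 _ (by positivity) one_pos.le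
            apply mul_le_mul h3 h4 (by positivity) (by positivity)
        _ = C' ^ n * (r₀ - rz)⁻¹ := by ring
      -- fix the initial rewrite of ‖circleMap‖
    have hbint : Integrable (fun _ : ℝ => C' ^ n * (r₀ - rz)⁻¹) μ := integrable_const _
    have hlim : ∀ᵐ t : ℝ ∂μ, Filter.Tendsto (fun k => F k t) Filter.atTop (nhds (G t)) := by
      refine haeL.mono fun t ht => ?_
      obtain ⟨hL1, hLt⟩ := ht
      have hρC : Filter.Tendsto (fun k => ((ρ k : ℝ) : ℂ)) Filter.atTop (nhds 1) := by
        have := (Complex.continuous_ofReal.tendsto 1).comp (hρ_tend.mono_right nhdsWithin_le_nhds)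
        simpa [Function.comp_def] using this
      have hcm : ∀ k, circleMap 0 (ρ k) t = ((ρ k : ℝ) : ℂ) * Complex.exp (t * Complex.I) := by
        intro k; rw [circleMap_zero]
      have he1 : Filter.Tendsto (fun k => circleMap 0 (ρ k) t) Filter.atTop
          (nhds (Complex.exp (t * Complex.I))) := by
        simp only [hcm]
        have := hρC.mul_const (Complex.exp (t * Complex.I))
        simpa using this
      have hfrad : Filter.Tendsto (fun k => f (circleMap 0 (ρ k) t)) Filter.atTop
          (nhds (Lf t)) := by
        have := hLt.comp hρ_tend
        simp only [Function.comp_def] at this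
        simp only [hcm]
        exact this
      have hene : Complex.exp (t * Complex.I) - z₀ ≠ 0 := by
        intro hzero
        have h1 : Complex.exp (t * Complex.I) = z₀ := by linear_combination hzero
        have := congrArg norm h1
        rw [Complex.norm_exp_ofReal_mul_I] at this
        rw [← hrzdef] at this
        linarith
      rw [hG]
      exact (he1.mul tendsto_const_nhds).smul
        (((he1.sub tendsto_const_nhds).inv₀ hene).smul (hfrad.pow n))
    have hconv := MeasureTheory.tendsto_integral_of_dominated_convergence
      (fun _ => C' ^ n * (r₀ - rz)⁻¹) hFmeas hbint hbound hlim
    have hGint : (∫ t, G t ∂μ) = (2 * Real.pi * Complex.I : ℂ) • (f z₀) ^ n := by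
      refine tendsto_nhds_unique hconv ?_
      rw [Filter.tendsto_congr (fun k => hFk_eq k)]
      exact tendsto_const_nhds
    have hGbound : ‖∫ t, G t ∂μ‖ ≤ (1 - rz)⁻¹ * (μ Set.univ).toReal := by
      apply MeasureTheory.norm_integral_le_of_norm_le_const
      refine haeL.mono fun t ht => ?_
      obtain ⟨hL1, _⟩ := ht
      rw [hG]
      simp only [norm_smul, norm_mul, Complex.norm_I, mul_one, norm_inv, norm_pow, hL1, one_pow,
        mul_one]
      have habs : ‖Complex.exp (t * Complex.I)‖ = 1 := by
        rw [Complex.norm_exp_ofReal_mul_I]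
      rw [habs, one_mul]
      have h2 : 1 - rz ≤ ‖Complex.exp (t * Complex.I) - z₀‖ := by
        have := norm_sub_norm_le (Complex.exp (t * Complex.I)) z₀
        rw [habs, ← hrzdef] at this
        linarith
      exact inv_anti₀ (by linarith) h2
    have hμuniv : (μ Set.univ).toReal = 2 * Real.pi := by
      rw [hμ, Measure.restrict_apply_univ, Real.volume_Ioc]
      rw [ENNReal.toReal_ofReal (by linarith [Real.pi_pos] : (0:ℝ) ≤ 2 * Real.pi - 0)]
      ring
    rw [hGint, hμuniv] at hGbound
    have hnorm : ‖(2 * Real.pi * Complex.I : ℂ) • (f z₀) ^ n‖ = 2 * Real.pi * ‖f z₀‖ ^ n := by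
      rw [norm_smul, norm_pow]
      have : ‖(2 * Real.pi * Complex.I : ℂ)‖ = 2 * Real.pi := by
        simp [norm_mul, Complex.norm_I, Complex.norm_real, abs_of_pos Real.pi_pos]
      rw [this]
    rw [hnorm] at hGbound
    have hpi := Real.pi_pos
    nlinarith [pow_nonneg (norm_nonneg (f z₀)) n]
  -- conclude
  by_contra hgt
  push_neg at hgt
  have htend : Filter.Tendsto (fun n : ℕ => ‖f z₀‖ ^ n) Filter.atTop Filter.atTop :=
    tendsto_pow_atTop_atTop_of_one_lt hgt
  obtain ⟨n, hn⟩ := (htend.eventually_gt_atTop ((1 - rz)⁻¹)).exists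
  exact absurd (key n) (not_le.2 hn)

lemma eq_const_of_norm_max {u : ℂ → ℂ} {z₀ : ℂ} (hd : DifferentiableOn ℂ u 𝔻)
    (hz₀ : z₀ ∈ 𝔻) (hle : ∀ z ∈ 𝔻, ‖u z‖ ≤ ‖u z₀‖) : ∀ z ∈ 𝔻, u z = u z₀ := by
  have hmax : IsMaxOn (norm ∘ u) 𝔻 z₀ := fun z hz => hle z hz
  have := Complex.eqOn_of_isPreconnected_of_isMaxOn_norm
    (convex_ball (0:ℂ) 1).isPreconnected Metric.isOpen_ball hd hz₀ hmax
  intro z hz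
  exact this hz

lemma const_of_bounded_below {u : ℂ → ℂ} (hu : InnerDisc u) {m : ℝ} (hm : 0 < m)
    (hlow : ∀ z ∈ 𝔻, m ≤ ‖u z‖) : ∃ c : ℂ, ‖c‖ = 1 ∧ ∀ z ∈ 𝔻, u z = c := by
  have hne : ∀ z ∈ 𝔻, u z ≠ 0 := by
    intro z hz h0
    have := hlow z hz
    rw [h0, norm_zero] at this
    linarith
  have hinv : InnerDisc (fun z => (u z)⁻¹) := by
    refine ⟨hu.1.inv hne, ⟨m⁻¹, ?_⟩, ?_⟩
    · intro z hz
      rw [norm_inv]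
      exact inv_anti₀ hm (hlow z hz)
    · filter_upwards [hu.2.2] with s hs
      obtain ⟨L, hL1, hLt⟩ := hs
      have hL0 : L ≠ 0 := by intro h; rw [h, norm_zero] at hL1; simp at hL1
      exact ⟨L⁻¹, by rw [norm_inv, hL1, inv_one], hLt.inv₀ hL0⟩
  have h1 := inner_norm_le_one hu
  have h2 : ∀ z ∈ 𝔻, ‖u z‖ = 1 := by
    intro z hz
    have ha := h1 z hz
    have hb := inner_norm_le_one hinv z hz
    rw [norm_inv] at hb
    have hpos : 0 < ‖u z‖ := lt_of_lt_of_le hm (hlow z hz)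
    have : 1 ≤ ‖u z‖ := by
      rw [← inv_mul_cancel₀ hpos.ne']
      calc ‖u z‖⁻¹ * ‖u z‖ ≤ 1 * ‖u z‖ :=
        mul_le_mul_of_nonneg_right hb hpos.le
      _ = ‖u z‖ := one_mul _
    linarith
  have h0 : (0:ℂ) ∈ 𝔻 := Metric.mem_ball_self one_pos
  refine ⟨u 0, h2 0 h0, ?_⟩
  exact eq_const_of_norm_max hu.1 h0 (fun z hz => by rw [h2 z hz, h2 0 h0])

lemma no_zero_divisor {u v : ℂ → ℂ} (hu : InnerDisc u) (hv : InnerDisc v)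
    (h : ∀ z ∈ 𝔻, u z * v z = 0) : False := by
  obtain ⟨z₁, hz₁, hne⟩ := inner_exists_ne_zero hu
  have hA : AnalyticOnNhd ℂ v 𝔻 := hv.1.analyticOnNhd Metric.isOpen_ball
  have hev : v =ᶠ[nhds z₁] 0 := by
    have hcu : ContinuousAt u z₁ :=
      (hu.1.differentiableAt (Metric.isOpen_ball.mem_nhds hz₁)).continuousAt
    filter_upwards [hcu.eventually_ne hne, Metric.isOpen_ball.mem_nhds hz₁] with w hw hwb
    exact (mul_eq_zero.1 (h w hwb)).resolve_left hw
  have heq := hA.eqOn_zero_of_preconnected_of_eventuallyEq_zero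
    (convex_ball (0:ℂ) 1).isPreconnected hz₁ hev
  obtain ⟨z₂, hz₂, hne₂⟩ := inner_exists_ne_zero hv
  exact hne₂ (heq hz₂)


lemma coprime_of_constants {X Y : ℂ → ℂ} {b b' : ℂ} (hX : ∀ z ∈ 𝔻, X z = b)
    (hY : ∀ z ∈ 𝔻, Y z = b') : CoprimeInner X Y := by
  intro u hdX hdY
  obtain ⟨huI, v, hvI, hXe⟩ := hdX
  obtain ⟨-, w, hwI, hYe⟩ := hdY
  have main : ∀ (Z : ℂ → ℂ) (b₀ : ℂ), b₀ ≠ 0 → (∀ z ∈ 𝔻, Z z = b₀) →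
      (∃ v' : ℂ → ℂ, InnerDisc v' ∧ ∀ z ∈ 𝔻, Z z = u z * v' z) →
      ∃ c : ℂ, ‖c‖ = 1 ∧ ∀ z ∈ 𝔻, u z = c := by
    rintro Z b₀ hb₀ hZ ⟨v', hv'I, hZe⟩
    have hv'le := inner_norm_le_one hv'I
    have hlow : ∀ z ∈ 𝔻, ‖b₀‖ ≤ ‖u z‖ := by
      intro z hz
      have hzz : b₀ = u z * v' z := by rw [← hZ z hz, hZe z hz]
      calc ‖b₀‖ = ‖u z‖ * ‖v' z‖ := by rw [hzz, norm_mul]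
        _ ≤ ‖u z‖ * 1 := mul_le_mul_of_nonneg_left (hv'le z hz) (norm_nonneg _)
        _ = ‖u z‖ := mul_one _
    exact const_of_bounded_below huI (norm_pos_iff.2 hb₀) hlow
  by_cases hb : b = 0
  · by_cases hb' : b' = 0
    · exfalso
      apply no_zero_divisor huI hvI
      intro z hz
      rw [← hXe z hz, hX z hz, hb]
    · exact main Y b' hb' hY ⟨w, hwI, hYe⟩
  · exact main X b hb hX ⟨v, hvI, hXe⟩

lemma contOn_blaschke {α : ℂ} (hα : ‖α‖ < 1) :
    ContinuousOn (blaschkeFactor α) (Metric.closedBall (0:ℂ) 1) := by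
  show ContinuousOn (fun z => (z - α) / (1 - (starRingEnd ℂ) α * z)) _
  apply ContinuousOn.div
  · exact (continuous_id.sub continuous_const).continuousOn
  · exact (continuous_const.sub (continuous_const.mul continuous_id)).continuousOn
  · intro z hz
    exact denom_ne_zero hα (by rwa [Metric.mem_closedBall, dist_zero_right] at hz)


lemma core {θ δ : ℂ → ℂ} (φ : ℂ → ℂ) (hθ : IsFiniteBlaschke θ) (hδ : IsFiniteBlaschke δ)
    (hdisj : zeroSet θ ∩ zeroSet δ = ∅) (hφ : ∀ z ∈ 𝔻, φ z ∈ 𝔻) :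
    CoprimeInner (θ ∘ φ) (δ ∘ φ) := by
  intro u hdX hdY
  obtain ⟨huI, F₁, hF₁I, hFe⟩ := hdX
  obtain ⟨-, G₁, hG₁I, hGe⟩ := hdY
  by_cases hlow : ∃ m, 0 < m ∧ ∀ z ∈ 𝔻, m ≤ ‖u z‖
  · obtain ⟨m, hm, hmu⟩ := hlow
    exact const_of_bounded_below huI hm hmu
  · exfalso
    push_neg at hlow
    have hseq : ∀ n : ℕ, ∃ z ∈ 𝔻, ‖u z‖ < 1/(n+1) := by
      intro n
      obtain ⟨z, hz, hzn⟩ := hlow (1/(n+1)) (by positivity)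
      exact ⟨z, hz, hzn⟩
    choose zs hzs hzu using hseq
    set ws : ℕ → ℂ := fun n => φ (zs n) with hws
    have hwmem : ∀ n, ws n ∈ Metric.closedBall (0:ℂ) 1 := fun n =>
      Metric.ball_subset_closedBall (hφ _ (hzs n))
    obtain ⟨w₀, hw₀, ψ, hψ, hψt⟩ := (isCompact_closedBall (0:ℂ) 1).tendsto_subseq hwmem
    have hlimit : ∀ (T F₂ : ℂ → ℂ), IsFiniteBlaschke T →
        (∀ z ∈ 𝔻, ‖F₂ z‖ ≤ 1) →
        (∀ z ∈ 𝔻, (T ∘ φ) z = u z * F₂ z) →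
        w₀ ∈ 𝔻 ∧ T w₀ = 0 := by
      rintro T F₂ ⟨cT, dT, aT, hcT, haT, hTf⟩ hF₂le hTe
      set Tt : ℂ → ℂ := fun w => cT * ∏ j, blaschkeFactor (aT j) w with hTt
      have hTcont : ContinuousOn Tt (Metric.closedBall (0:ℂ) 1) :=
        continuousOn_const.mul (contOn_prod fun j _ => contOn_blaschke (haT j))
      have h1 : Filter.Tendsto (fun k => Tt (ws (ψ k))) Filter.atTop (nhds (Tt w₀)) := by
        have hc1 : ContinuousWithinAt Tt (Metric.closedBall (0:ℂ) 1) w₀ := hTcont w₀ hw₀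
        refine hc1.tendsto.comp ?_
        rw [tendsto_nhdsWithin_iff]
        exact ⟨hψt, Filter.Eventually.of_forall fun k => hwmem (ψ k)⟩
      have h2 : Filter.Tendsto (fun n => Tt (ws n)) Filter.atTop (nhds 0) := by
        rw [tendsto_zero_iff_norm_tendsto_zero]
        apply squeeze_zero (fun n => norm_nonneg _) (g := fun n : ℕ => 1/((n:ℝ)+1))
        · intro n
          have hmem : ws n ∈ 𝔻 := hφ _ (hzs n)
          have : Tt (ws n) = (T ∘ φ) (zs n) := by
            rw [Function.comp_apply, hTf (ws n) hmem]
          rw [this, hTe _ (hzs n), norm_mul]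
          calc ‖u (zs n)‖ * ‖F₂ (zs n)‖ ≤ (1/((n:ℝ)+1)) * 1 := by
                apply mul_le_mul (hzu n).le (hF₂le _ (hzs n)) (norm_nonneg _) (by positivity)
            _ = 1/((n:ℝ)+1) := mul_one _
        · exact tendsto_one_div_add_atTop_nhds_zero_nat
      have hT0 : Tt w₀ = 0 := tendsto_nhds_unique h1 (h2.comp hψ.tendsto_atTop)
      have hw₀𝔻 : w₀ ∈ 𝔻 := by
        rw [Metric.mem_closedBall, dist_zero_right] at hw₀
        rw [mem_disc]
        rcases lt_or_eq_of_le hw₀ with h | h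
        · exact h
        · exfalso
          have : ‖Tt w₀‖ = 1 := by
            rw [hTt]
            simp only
            rw [norm_mul, hcT, one_mul, norm_prod,
              Finset.prod_congr rfl (fun j _ => norm_blaschke_eq_one (haT j) h),
              Finset.prod_const_one]
          rw [hT0, norm_zero] at this
          simp at this
      exact ⟨hw₀𝔻, by rw [hTf w₀ hw₀𝔻]; exact hT0⟩
    obtain ⟨hw₀𝔻, hθ0⟩ := hlimit θ F₁ hθ (inner_norm_le_one hF₁I) hFe
    obtain ⟨-, hδ0⟩ := hlimit δ G₁ hδ (inner_norm_le_one hG₁I) hGe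
    have : w₀ ∈ zeroSet θ ∩ zeroSet δ := ⟨⟨hw₀𝔻, hθ0⟩, ⟨hw₀𝔻, hδ0⟩⟩
    rw [hdisj] at this
    exact this

lemma blaschke_divides_comp {ω : ℂ → ℂ} (hω : InnerDisc ω) (hm : ∀ z ∈ 𝔻, ‖ω z‖ < 1)
    {θ : ℂ → ℂ} (hθ : IsFiniteBlaschke θ) {a : ℂ} (ha : a ∈ 𝔻) (h0 : θ a = 0) :
    InnerDivides (fun z => blaschkeFactor a (ω z)) (θ ∘ ω) := by
  classical
  obtain ⟨c, d, α, hc, hα, hθf⟩ := hθ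
  have hc0 : c ≠ 0 := by
    intro h; rw [h, norm_zero] at hc; simp at hc
  have hprod : ∏ j, blaschkeFactor (α j) a = 0 := by
    have hfa := hθf a ha
    rw [h0] at hfa
    exact (mul_eq_zero.1 hfa.symm).resolve_left hc0
  obtain ⟨j₀, -, hj₀⟩ := Finset.prod_eq_zero_iff.1 hprod
  have haj : α j₀ = a := ((blaschke_eq_zero (hα j₀) (mem_disc.1 ha).le).1 hj₀).symm
  refine ⟨innerDisc_comp_bl hω hm (mem_disc.1 ha),
    ⟨fun z => c * ∏ j ∈ Finset.univ.erase j₀, blaschkeFactor (α j) (ω z),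
      innerDisc_comp_prod hω hm hc hα _, ?_⟩⟩
  intro z hz
  have hwz : ω z ∈ 𝔻 := mem_disc.2 (hm z hz)
  rw [Function.comp_apply, hθf (ω z) hwz,
    ← Finset.mul_prod_erase Finset.univ _ (Finset.mem_univ j₀), haj]
  ring

/-- Suppose `θ` and `δ` are finite Blaschke products and `ω` is an inner function which is
either a nonconstant finite Blaschke product, or whose range sets at its boundary
singularities cover `𝒵(θ) ∪ 𝒵(δ)`.  Then `θ` and `δ` are coprime iff `θ∘ω` and `δ∘ω`
are coprime. -/
theorem coprime_comp_iff (θ δ ω : ℂ → ℂ)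
    (hθ : IsFiniteBlaschke θ) (hδ : IsFiniteBlaschke δ) (hω : InnerDisc ω)
    (hcase :
      (IsFiniteBlaschke ω ∧ ¬ ∃ c : ℂ, ∀ z ∈ Metric.ball (0 : ℂ) 1, ω z = c) ∨
      (zeroSet θ ∪ zeroSet δ ⊆
        ⋃ z₀ ∈ {z₀ : ℂ | ‖z₀‖ = 1 ∧ HasSingularityAt ω z₀}, rangeSet ω z₀)) :
    CoprimeInner θ δ ↔ CoprimeInner (θ ∘ ω) (δ ∘ ω) := by
  constructor
  · intro h
    have hdisj : zeroSet θ ∩ zeroSet δ = ∅ := by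
      by_contra hne
      obtain ⟨a, ⟨ha𝔻, haθ0⟩, -, haδ0⟩ := Set.nonempty_iff_ne_empty.2 hne
      have hidm : ∀ z ∈ 𝔻, ‖(fun z : ℂ => z) z‖ < 1 := fun z hz => mem_disc.1 hz
      have hd1 : InnerDivides (fun z => blaschkeFactor a z) θ :=
        blaschke_divides_comp innerDisc_id hidm hθ ha𝔻 haθ0
      have hd2 : InnerDivides (fun z => blaschkeFactor a z) δ :=
        blaschke_divides_comp innerDisc_id hidm hδ ha𝔻 haδ0
      obtain ⟨c, hc1, hcz⟩ := h _ hd1 hd2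
      have hval := hcz a ha𝔻
      rw [show blaschkeFactor a a = 0 from by simp [blaschkeFactor]] at hval
      rw [← hval, norm_zero] at hc1
      simp at hc1
    by_cases hmap : ∀ z ∈ 𝔻, ‖ω z‖ < 1
    · exact core ω hθ hδ hdisj (fun z hz => mem_disc.2 (hmap z hz))
    · push_neg at hmap
      obtain ⟨z₀, hz₀, hz₀n⟩ := hmap
      have hle := inner_norm_le_one hω
      have h1 : ‖ω z₀‖ = 1 := le_antisymm (hle z₀ hz₀) hz₀n
      have hconst : ∀ z ∈ 𝔻, ω z = ω z₀ :=
        eq_const_of_norm_max hω.1 hz₀ (fun z hz => by rw [h1]; exact hle z hz)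
      exact coprime_of_constants (b := θ (ω z₀)) (b' := δ (ω z₀))
        (fun z hz => by rw [Function.comp_apply, hconst z hz])
        (fun z hz => by rw [Function.comp_apply, hconst z hz])
  · intro h
    have hdisj : zeroSet θ ∩ zeroSet δ = ∅ := by
      by_contra hne
      obtain ⟨a, ⟨ha𝔻, haθ0⟩, -, haδ0⟩ := Set.nonempty_iff_ne_empty.2 hne
      have hncon : ¬ ∃ c : ℂ, ∀ z ∈ 𝔻, ω z = c := by
        rcases hcase with ⟨-, hnc⟩ | hsub
        · exact hnc
        · rintro ⟨c, hc⟩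
          have hmem : a ∈ ⋃ z₀ ∈ {z₀ : ℂ | ‖z₀‖ = 1 ∧ HasSingularityAt ω z₀},
              rangeSet ω z₀ := hsub (Or.inl ⟨ha𝔻, haθ0⟩)
          simp only [Set.mem_iUnion] at hmem
          obtain ⟨z₀, hz₀, -⟩ := hmem
          exact hz₀.2 ⟨Set.univ, fun _ => c, isOpen_univ, Set.mem_univ _,
            differentiableOn_const _, fun w hw => (hc w hw.2).symm⟩
      have hmap : ∀ z ∈ 𝔻, ‖ω z‖ < 1 := by
        by_contra hm
        push_neg at hm
        obtain ⟨z₀, hz₀, hz₀n⟩ := hm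
        have hle := inner_norm_le_one hω
        have h1 : ‖ω z₀‖ = 1 := le_antisymm (hle z₀ hz₀) hz₀n
        exact hncon ⟨ω z₀,
          eq_const_of_norm_max hω.1 hz₀ (fun z hz => by rw [h1]; exact hle z hz)⟩
      have hd1 := blaschke_divides_comp hω hmap hθ ha𝔻 haθ0
      have hd2 := blaschke_divides_comp hω hmap hδ ha𝔻 haδ0
      obtain ⟨c, hc1, hcz⟩ := h _ hd1 hd2
      apply hncon
      have hden : (1 + c * (starRingEnd ℂ) a) ≠ 0 := by
        intro hzero
        have h1 : c * (starRingEnd ℂ) a = -1 := by linear_combination hzero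
        have h2 := congrArg norm h1
        rw [norm_mul, hc1, one_mul, RCLike.norm_conj, norm_neg, norm_one] at h2
        exact absurd h2 (ne_of_lt (mem_disc.1 ha𝔻))
      refine ⟨(a + c) / (1 + c * (starRingEnd ℂ) a), ?_⟩
      intro z hz
      have hzb := hcz z hz
      have hd0 := denom_ne_zero (mem_disc.1 ha𝔻) (hmap z hz).le
      rw [blaschkeFactor, div_eq_iff hd0] at hzb
      rw [eq_div_iff hden]
      linear_combination hzb
    exact core (fun z : ℂ => z) hθ hδ hdisj (fun z hz => hz)
end
end
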